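/- Let {G_n} be a weakly convergent sequence of finite connected graphs with degree bound d and |V(G_n)| → ∞, and let {A_n} be a weakly convergent operator sequence (uniformly bounded kernels of uniformly bounded range that are pattern-invariant with respect to balls of radius s). Then the limit tr({A_n}) := lim_{n→∞} (1/|V(G_n)|) Σ_{x∈V(G_n)} A_n(x,x) exists, and equals Σ_α (lim_n p_{G_n}(α)) · f^A_α(root), where the sum is over rooted isomorphism classes α of s-balls with nonvanishing limiting frequency and f^A_α is the invariant function giving the diagonal kernel value at the root for pattern α. -/

import Mathlib

open scoped Classical

noncomputable section

namespace GraphPaper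

open Filter

variable {V W : Type*}

/-- The star of a vertex `y` in `G`: the subgraph consisting of `y`, its neighbours and the
edges from `y` to its neighbours (realized as a graph on the full vertex set). -/
def graphStar (G : SimpleGraph V) (y : V) : SimpleGraph V where
  Adj a b := G.Adj a b ∧ (a = y ∨ b = y)
  symm := ⟨fun a b h => ⟨h.1.symm, h.2.symm⟩⟩
  loopless := ⟨fun a h => G.loopless.irrefl a h.1⟩

/-- Rooted isomorphism of graphs with distinguished roots. -/
def rootedIso (G : SimpleGraph V) (y : V) (H : SimpleGraph W) (z : W) : Prop :=
  ∃ e : V ≃ W, e y = z ∧ ∀ a b : V, G.Adj a b ↔ H.Adj (e a) (e b)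

/-- δ(G,H): proportion of vertices whose stars differ up to rooted isomorphism. -/
def starDelta [Fintype V] (G H : SimpleGraph V) : ℝ :=
  (Nat.card {y : V | ¬ rootedIso (graphStar G y) y (graphStar H y) y} : ℝ) /
    (Fintype.card V : ℝ)

/-- `H^σ`, the graph with edges `(σ x, σ y)` for `(x,y) ∈ E(H)`. -/
def permGraph (H : SimpleGraph V) (σ : Equiv.Perm V) : SimpleGraph V :=
  SimpleGraph.comap (σ.symm : V → V) H

/-- δ_s(G,H) = min over permutations σ of δ(G,H^σ). -/
def deltaS [Fintype V] (G H : SimpleGraph V) : ℝ :=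
  ⨅ σ : Equiv.Perm V, starDelta G (permGraph H σ)

/-- The disjoint union of `q` copies of `G`. -/
def copies (q : ℕ) (G : SimpleGraph V) : SimpleGraph (Fin q × V) where
  Adj a b := a.1 = b.1 ∧ G.Adj a.2 b.2
  symm := ⟨fun a b h => ⟨h.1.symm, h.2.symm⟩⟩
  loopless := ⟨fun a h => G.loopless.irrefl a.2 h.2⟩

/-- The geometric distance δ_ρ(G,H) = inf { δ_s(qG, rH) : q|V(G)| = r|V(H)| }, where the
two disjoint unions are represented on a common vertex set via an equivalence. -/
def deltaRho [Fintype V] [Fintype W] (G : SimpleGraph V) (H : SimpleGraph W) : ℝ :=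
  sInf { x : ℝ | ∃ q r : ℕ, 0 < q ∧ 0 < r ∧ q * Fintype.card V = r * Fintype.card W ∧
    x = ⨅ e : (Fin q × V) ≃ (Fin r × W),
      starDelta (copies q G) (SimpleGraph.comap (e : Fin q × V → Fin r × W) (copies r H)) }

/-- Vertex degree bound `d`. -/
def degBound (G : SimpleGraph V) (d : ℕ) : Prop := ∀ v : V, (G.neighborSet v).ncard ≤ d

/-- The ball of radius `r` around `x` in the shortest path metric. -/
def ballSet (G : SimpleGraph V) (x : V) (r : ℕ) : Set V :=
  {v | G.Reachable x v ∧ G.dist x v ≤ r}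

theorem root_mem (G : SimpleGraph V) (x : V) (r : ℕ) : x ∈ ballSet G x r :=
  ⟨SimpleGraph.Reachable.refl x, by simp [SimpleGraph.dist_self]⟩

/-- `B_r(x)` (rooted at `x`) represents the rooted pattern `(H, y)`. -/
def ballRep (G : SimpleGraph V) (x : V) (r : ℕ) (H : SimpleGraph W) (y : W) : Prop :=
  ∃ f : ballSet G x r ≃ W, f ⟨x, root_mem G x r⟩ = y ∧
    ∀ a b : ballSet G x r, G.Adj (a : V) (b : V) ↔ H.Adj (f a) (f b)

/-- `p_G(α)`: the frequency of vertices whose rooted `r`-ball represents the pattern `(H,y)`. -/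
def patternFreq [Fintype V] (G : SimpleGraph V) (r : ℕ) (H : SimpleGraph W) (y : W) : ℝ :=
  (Nat.card {x : V | ballRep G x r H y} : ℝ) / (Fintype.card V : ℝ)

/-- All connected components of `G` have at most `K` vertices. -/
def smallComps (G : SimpleGraph V) (K : ℕ) : Prop :=
  ∀ x : V, Nat.card {y : V | G.Reachable x y} ≤ K

/-- The subgraph induced on a set `s` (kept on the full vertex set). -/
def inducedOn (G : SimpleGraph V) (s : Set V) : SimpleGraph V where
  Adj a b := G.Adj a b ∧ a ∈ s ∧ b ∈ s
  symm := ⟨fun a b h => ⟨h.1.symm, h.2.2, h.2.1⟩⟩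
  loopless := ⟨fun a h => G.loopless.irrefl a h.1⟩

/-- The (inner) boundary of `s` in `G`. -/
def gBoundary (G : SimpleGraph V) (s : Set V) : Set V :=
  {x | x ∈ s ∧ ∃ y, y ∉ s ∧ G.Adj x y}

/-- The `s`-ball of `x` is the same (as a labeled subgraph) in `G₁` and `G₂`. -/
def sBallMatch (G₁ G₂ : SimpleGraph V) (s : ℕ) (x : V) : Prop :=
  ballSet G₁ x s = ballSet G₂ x s ∧
  ∀ a b : V, a ∈ ballSet G₁ x s → b ∈ ballSet G₁ x s → (G₁.Adj a b ↔ G₂.Adj a b)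

/-- The number of eigenvalues (roots of the characteristic polynomial, with multiplicity)
of `M` that are at most `lam`. -/
def specCount {ι : Type*} [Fintype ι] [DecidableEq ι] (M : Matrix ι ι ℝ) (lam : ℝ) : ℝ :=
  ((M.charpoly.roots.filter (fun x => x ≤ lam)).card : ℝ)

/-- The compression `p_n Δ i_n` of the Laplacian of `G` to a finite set `s`. -/
def lapCompress [DecidableEq V] (G : SimpleGraph V) (s : Finset V) : Matrix s s ℝ :=
  Matrix.of fun x y : s =>
    (if (x : V) = (y : V) then ((G.neighborSet (x : V)).ncard : ℝ) else 0) -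
      (if G.Adj (x : V) (y : V) then 1 else 0)

/-- The intrinsic Laplacian of the subgraph induced on a finite set `s`. -/
def lapInduced [DecidableEq V] (G : SimpleGraph V) (s : Finset V) : Matrix s s ℝ :=
  Matrix.of fun x y : s =>
    (if (x : V) = (y : V) then ((G.neighborSet (x : V) ∩ (s : Set V)).ncard : ℝ) else 0) -
      (if G.Adj (x : V) (y : V) then 1 else 0)


/-! ### Auxiliary lemmas -/

lemma rootedIso_refl (G : SimpleGraph V) (y : V) : rootedIso G y G y :=
  ⟨Equiv.refl V, rfl, fun _ _ => Iff.rfl⟩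

lemma rootedIso_symm {G : SimpleGraph V} {y : V} {H : SimpleGraph W} {z : W}
    (h : rootedIso G y H z) : rootedIso H z G y := by
  obtain ⟨e, he, ha⟩ := h
  refine ⟨e.symm, by simp [← he], fun a b => ?_⟩
  rw [ha (e.symm a) (e.symm b)]
  simp

lemma rootedIso_trans {U : Type*} {G : SimpleGraph V} {y : V} {H : SimpleGraph W} {z : W}
    {K : SimpleGraph U} {w : U} (h1 : rootedIso G y H z) (h2 : rootedIso H z K w) :
    rootedIso G y K w := by
  obtain ⟨e1, he1, ha1⟩ := h1
  obtain ⟨e2, he2, ha2⟩ := h2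
  exact ⟨e1.trans e2, by simp [he1, he2], fun a b => (ha1 a b).trans (ha2 _ _)⟩

lemma ballRep_congr {W' : Type*} {G : SimpleGraph V} {x : V} {r : ℕ} {H : SimpleGraph W} {z : W}
    {H' : SimpleGraph W'} {z' : W'} (h : ballRep G x r H z) (hiso : rootedIso H z H' z') :
    ballRep G x r H' z' := by
  obtain ⟨f, hf, haf⟩ := h
  obtain ⟨e, he, hae⟩ := hiso
  exact ⟨f.trans e, by simp [hf, he], fun a b => (haf a b).trans (hae _ _)⟩

lemma ballRep_self (G : SimpleGraph V) (x : V) (r : ℕ) :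
    ballRep G x r (SimpleGraph.induce (ballSet G x r) G) ⟨x, root_mem G x r⟩ :=
  ⟨Equiv.refl _, rfl, fun _ _ => Iff.rfl⟩

lemma ballRep_iso_of_rep {W' : Type*} {G : SimpleGraph V} {x : V} {r : ℕ} {H : SimpleGraph W}
    {z : W} {H' : SimpleGraph W'} {z' : W'} (h1 : ballRep G x r H z) (h2 : ballRep G x r H' z') :
    rootedIso H z H' z' := by
  obtain ⟨f1, hf1, ha1⟩ := h1
  obtain ⟨f2, hf2, ha2⟩ := h2
  refine ⟨f1.symm.trans f2, by rw [← hf1]; simp [hf2], fun a b => ?_⟩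
  have := (ha1 (f1.symm a) (f1.symm b)).symm.trans (ha2 (f1.symm a) (f1.symm b))
  simpa using this

lemma ballSet_zero (G : SimpleGraph V) (x : V) : ballSet G x 0 = {x} := by
  ext v
  simp only [ballSet, Set.mem_setOf_eq, Set.mem_singleton_iff, Nat.le_zero]
  constructor
  · rintro ⟨hr, hd⟩
    rcases SimpleGraph.dist_eq_zero_iff_eq_or_not_reachable.mp hd with h | h
    · exact h.symm
    · exact absurd hr h
  · rintro rfl
    exact ⟨SimpleGraph.Reachable.refl _, SimpleGraph.dist_self⟩

lemma ballSet_succ_subset (G : SimpleGraph V) (x : V) (r : ℕ) :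
    ballSet G x (r + 1) ⊆ ballSet G x r ∪ ⋃ u ∈ ballSet G x r, G.neighborSet u := by
  rintro v ⟨hr, hd⟩
  by_cases h : G.dist x v ≤ r
  · exact Or.inl ⟨hr, h⟩
  · have hd' : G.dist x v = r + 1 := le_antisymm hd (by omega)
    obtain ⟨p, hp⟩ := hr.exists_walk_length_eq_dist
    have hnil : ¬ p.reverse.Nil := by
      rw [SimpleGraph.Walk.nil_iff_length_eq]
      simp [hp, hd']
    obtain ⟨u, hadj, q, hq⟩ := SimpleGraph.Walk.not_nil_iff.mp hnil
    have hlen : q.length = r := by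
      have := congrArg SimpleGraph.Walk.length hq
      simp [hp, hd'] at this
      omega
    right
    refine Set.mem_iUnion₂.mpr ⟨u, ⟨⟨q.reverse.reachable, ?_⟩, hadj.symm⟩⟩
    calc G.dist x u ≤ q.reverse.length := SimpleGraph.dist_le _
      _ = r := by simp [hlen]

lemma ballSet_ncard_le [Fintype V] (G : SimpleGraph V) (d : ℕ) (hd : degBound G d) (x : V) :
    ∀ r : ℕ, (ballSet G x r).ncard ≤ (d + 1) ^ r := by
  intro r
  induction r with
  | zero => simp [ballSet_zero]
  | succ r ih =>
    classical
    have h1 := Set.ncard_le_ncard (ballSet_succ_subset G x r) (Set.toFinite _)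
    set B : Finset V := (ballSet G x r).toFinset with hB
    have hsub : (⋃ u ∈ ballSet G x r, G.neighborSet u) ⊆
        ↑(B.biUnion fun u => (G.neighborSet u).toFinset) := by
      intro v hv
      obtain ⟨u, hu, hv'⟩ := Set.mem_iUnion₂.mp hv
      simp only [Finset.coe_biUnion, Set.mem_iUnion, Finset.mem_coe, Set.mem_toFinset, hB]
      exact ⟨u, hu, hv'⟩
    have h2 : (⋃ u ∈ ballSet G x r, G.neighborSet u).ncard ≤ B.card * d := by
      refine le_trans (Set.ncard_le_ncard hsub (Set.toFinite _)) ?_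
      rw [Set.ncard_coe_finset]
      refine le_trans Finset.card_biUnion_le ?_
      refine le_trans (Finset.sum_le_card_nsmul _ _ d fun u _ => ?_) (by simp [mul_comm])
      rw [← Set.ncard_eq_toFinset_card']
      exact hd u
    have hBcard : B.card = (ballSet G x r).ncard := (Set.ncard_eq_toFinset_card' _).symm
    calc (ballSet G x (r + 1)).ncard
        ≤ (ballSet G x r).ncard + (⋃ u ∈ ballSet G x r, G.neighborSet u).ncard :=
          le_trans h1 (Set.ncard_union_le _ _)
      _ ≤ (d + 1) ^ r + (d + 1) ^ r * d := by
          have h3 : (⋃ u ∈ ballSet G x r, G.neighborSet u).ncard ≤ (d + 1) ^ r * d := by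
            calc (⋃ u ∈ ballSet G x r, G.neighborSet u).ncard ≤ B.card * d := h2
              _ = (ballSet G x r).ncard * d := by rw [hBcard]
              _ ≤ (d + 1) ^ r * d := Nat.mul_le_mul_right d ih
          omega
      _ = (d + 1) ^ (r + 1) := by ring

/-- The (finite) index type of rooted patterns on at most `D` vertices. -/
abbrev PatIdx (D : ℕ) := Σ k : Fin (D + 1), SimpleGraph (Fin (k : ℕ)) × Fin (k : ℕ)

/-- Rooted isomorphism as a setoid on `PatIdx D`. -/
def patSetoid (D : ℕ) : Setoid (PatIdx D) where
  r a b := rootedIso a.2.1 a.2.2 b.2.1 b.2.2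
  iseqv := ⟨fun a => rootedIso_refl _ _, rootedIso_symm, rootedIso_trans⟩

lemma patSetoid_out_iso (D : ℕ) (j : PatIdx D) :
    rootedIso ((⟦j⟧ : Quotient (patSetoid D)).out).2.1 ((⟦j⟧ : Quotient (patSetoid D)).out).2.2
      j.2.1 j.2.2 :=
  @Quotient.mk_out _ (patSetoid D) j

lemma patSetoid_eq_of_iso {D : ℕ} {q q' : Quotient (patSetoid D)}
    (h : rootedIso q.out.2.1 q.out.2.2 q'.out.2.1 q'.out.2.2) : q = q' :=
  Quotient.out_equiv_out.mp h

lemma exists_patIdx_rep [Fintype V] (G : SimpleGraph V) (x : V) (r : ℕ) (D : ℕ)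
    (hle : (ballSet G x r).ncard ≤ D) :
    ∃ j : PatIdx D, ballRep G x r j.2.1 j.2.2 := by
  classical
  set k := Fintype.card (ballSet G x r) with hk
  have hkD : k ≤ D := by
    rw [hk, ← Nat.card_eq_fintype_card, Nat.card_coe_set_eq]
    exact hle
  let e : ballSet G x r ≃ Fin k := Fintype.equivFin _
  refine ⟨⟨⟨k, Nat.lt_succ_of_le hkD⟩,
    { Adj := fun i j => G.Adj ((e.symm i : ballSet G x r) : V) ((e.symm j : ballSet G x r) : V)
      symm := ⟨fun i j h => h.symm⟩
      loopless := ⟨fun i h => G.loopless.irrefl _ h⟩ },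
    e ⟨x, root_mem G x r⟩⟩, e, rfl, fun a b => ?_⟩
  simp

lemma main_tendsto {V : ℕ → Type} [∀ n, Fintype (V n)] [∀ n, Nonempty (V n)]
    (G : ∀ n, SimpleGraph (V n)) (s : ℕ) (m : ℝ) (A : ∀ n, V n → V n → ℝ)
    (hbd : ∀ n (x : V n), |A n x x| ≤ m)
    {I : Type*} [Fintype I] {W : I → Type*}
    (P : ∀ i, SimpleGraph (W i)) (y : ∀ i, W i) (p c : I → ℝ)
    (hcomp : ∀ n (x : V n), ∃! i, ballRep (G n) x s (P i) (y i))
    (hfreq : ∀ i, Filter.Tendsto (fun n => patternFreq (G n) s (P i) (y i))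
      Filter.atTop (nhds (p i)))
    (hc : ∀ i, p i ≠ 0 → ∀ n (x : V n), ballRep (G n) x s (P i) (y i) → A n x x = c i) :
    Filter.Tendsto (fun n => (∑ x : V n, A n x x) / (Fintype.card (V n) : ℝ))
      Filter.atTop (nhds (∑ i, p i * c i)) := by
  classical
  have hm : 0 ≤ m := le_trans (abs_nonneg _) (hbd 0 (Classical.arbitrary _))
  have hcard : ∀ n i, ((Finset.univ.filter
      (fun x : V n => ballRep (G n) x s (P i) (y i))).card : ℝ)
      = (Nat.card {x : V n | ballRep (G n) x s (P i) (y i)} : ℝ) := by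
    intro n i
    congr 1
    rw [Nat.card_coe_set_eq, Set.ncard_eq_toFinset_card', Set.toFinset_setOf]
  have hsplit : ∀ n, (∑ x : V n, A n x x) / (Fintype.card (V n) : ℝ) =
      ∑ i : I, (∑ x ∈ Finset.univ.filter (fun x : V n => ballRep (G n) x s (P i) (y i)),
        A n x x) / (Fintype.card (V n) : ℝ) := by
    intro n
    rw [← Finset.sum_div]
    congr 1
    set σ : V n → I := fun x => (hcomp n x).choose with hσdef
    have hσ : ∀ x, ballRep (G n) x s (P (σ x)) (y (σ x)) := fun x => (hcomp n x).choose_spec.1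
    have hfil : ∀ i, Finset.univ.filter (fun x : V n => ballRep (G n) x s (P i) (y i))
        = Finset.univ.filter (fun x => σ x = i) := by
      intro i
      apply Finset.filter_congr
      intro x _
      constructor
      · intro h
        exact ((hcomp n x).choose_spec.2 i h).symm
      · rintro rfl
        exact hσ x
    symm
    calc ∑ i : I, ∑ x ∈ Finset.univ.filter
          (fun x : V n => ballRep (G n) x s (P i) (y i)), A n x x
        = ∑ i : I, ∑ x ∈ Finset.univ.filter (fun x => σ x = i), A n x x :=
          Finset.sum_congr rfl fun i _ => by rw [hfil i]
      _ = ∑ x ∈ Finset.univ.filter (fun x => σ x ∈ Finset.univ), A n x x :=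
          Finset.sum_fiberwise_eq_sum_filter _ _ _ _
      _ = ∑ x : V n, A n x x := by simp
  have hterm : ∀ i : I, Filter.Tendsto (fun n =>
      (∑ x ∈ Finset.univ.filter (fun x : V n => ballRep (G n) x s (P i) (y i)), A n x x)
        / (Fintype.card (V n) : ℝ)) Filter.atTop (nhds (p i * c i)) := by
    intro i
    by_cases hpi : p i = 0
    · rw [hpi, zero_mul]
      apply squeeze_zero_norm (a := fun n => patternFreq (G n) s (P i) (y i) * m)
      · intro n
        have hN : (0:ℝ) < Fintype.card (V n) := by
          exact_mod_cast Fintype.card_pos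
        rw [Real.norm_eq_abs, abs_div, abs_of_nonneg hN.le]
        unfold patternFreq
        rw [div_mul_eq_mul_div]
        gcongr
        calc |∑ x ∈ Finset.univ.filter (fun x : V n => ballRep (G n) x s (P i) (y i)), A n x x|
            ≤ ∑ x ∈ Finset.univ.filter (fun x : V n => ballRep (G n) x s (P i) (y i)),
              |A n x x| := Finset.abs_sum_le_sum_abs _ _
          _ ≤ (Finset.univ.filter
              (fun x : V n => ballRep (G n) x s (P i) (y i))).card • m :=
              Finset.sum_le_card_nsmul _ _ _ fun x _ => hbd n x
          _ = (Nat.card {x : V n | ballRep (G n) x s (P i) (y i)} : ℝ) * m := by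
              rw [nsmul_eq_mul, hcard]
      · have := (hfreq i).mul_const m
        rwa [hpi, zero_mul] at this
    · have hval : ∀ n, (∑ x ∈ Finset.univ.filter
          (fun x : V n => ballRep (G n) x s (P i) (y i)), A n x x)
          / (Fintype.card (V n) : ℝ) = patternFreq (G n) s (P i) (y i) * c i := by
        intro n
        rw [Finset.sum_congr rfl (fun x hx => hc i hpi n x (Finset.mem_filter.mp hx).2),
          Finset.sum_const, nsmul_eq_mul, hcard]
        unfold patternFreq
        ring
      have : (fun n => (∑ x ∈ Finset.univ.filter
          (fun x : V n => ballRep (G n) x s (P i) (y i)), A n x x)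
          / (Fintype.card (V n) : ℝ))
          = fun n => patternFreq (G n) s (P i) (y i) * c i := funext hval
      rw [this]
      exact (hfreq i).mul_const (c i)
  exact (tendsto_finset_sum Finset.univ (fun i _ => hterm i)).congr
    (fun n => (hsplit n).symm)

/-- existence of the trace of a weakly convergent operator sequence, and
the formula tr = Σ_α (lim p(α)) · f^A_α(root) over a complete system of representatives
of ball patterns. -/
theorem trace_exists_and_formula (d s : ℕ) (m : ℝ) (V : ℕ → Type)
    [∀ n, Fintype (V n)] [∀ n, Nonempty (V n)]
    (G : ∀ n, SimpleGraph (V n))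
    (hconn : ∀ n, (G n).Connected) (hdeg : ∀ n, degBound (G n) d)
    (hcardinf : Filter.Tendsto (fun n => Fintype.card (V n)) Filter.atTop Filter.atTop)
    (hweak : ∀ r : ℕ, 1 ≤ r → ∀ (W : Type) [Fintype W], ∀ (P : SimpleGraph W) (p0 : W),
      ∃ L : ℝ, Filter.Tendsto (fun n => patternFreq (G n) r P p0) Filter.atTop (nhds L))
    (A : ∀ n, V n → V n → ℝ)
    (hbd : ∀ n x y, |A n x y| ≤ m)
    (hrange : ∀ n x y, (¬ (G n).Reachable x y ∨ s < (G n).dist x y) → A n x y = 0)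
    (hpat : ∀ k (x : V k),
      ¬ Filter.Tendsto
          (fun n => patternFreq (G n) s
            (SimpleGraph.induce (ballSet (G k) x s) (G k)) ⟨x, root_mem (G k) x s⟩)
          Filter.atTop (nhds 0) →
      ∀ l (z : V l) (f : ballSet (G l) z s ≃ ballSet (G k) x s),
        f ⟨z, root_mem (G l) z s⟩ = ⟨x, root_mem (G k) x s⟩ →
        (∀ a b : ballSet (G l) z s,
          (G l).Adj (a : V l) (b : V l) ↔ (G k).Adj (f a : V k) (f b : V k)) →
        ∀ a : ballSet (G l) z s, A l z (a : V l) = A k x (f a : V k)) :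
    ∃ L : ℝ,
      Filter.Tendsto (fun n => (∑ x : V n, A n x x) / (Fintype.card (V n) : ℝ))
        Filter.atTop (nhds L) ∧
      ∀ (I : Type) [Fintype I] (W : I → Type) [∀ i, Fintype (W i)]
        (P : ∀ i, SimpleGraph (W i)) (y : ∀ i, W i) (p c : I → ℝ),
        (∀ n (x : V n), ∃! i : I, ballRep (G n) x s (P i) (y i)) →
        (∀ i, Filter.Tendsto (fun n => patternFreq (G n) s (P i) (y i))
          Filter.atTop (nhds (p i))) →
        (∀ i, p i ≠ 0 → ∀ n (x : V n), ballRep (G n) x s (P i) (y i) → A n x x = c i) →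
        L = ∑ i : I, p i * c i := by
  classical
  set D := (d + 1) ^ s with hD
  let I₀ := Quotient (patSetoid D)
  haveI : Fintype I₀ := Quotient.fintype _
  let Wq : I₀ → Type := fun q => Fin ((q.out.1 : ℕ))
  let Pq : ∀ q : I₀, SimpleGraph (Wq q) := fun q => q.out.2.1
  let yq : ∀ q : I₀, Wq q := fun q => q.out.2.2
  have hcomp : ∀ n (x : V n), ∃! q : I₀, ballRep (G n) x s (Pq q) (yq q) := by
    intro n x
    obtain ⟨j, hj⟩ := exists_patIdx_rep (G n) x s D (ballSet_ncard_le (G n) d (hdeg n) x s)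
    have hjq : ballRep (G n) x s (Pq ⟦j⟧) (yq ⟦j⟧) :=
      ballRep_congr hj (rootedIso_symm (patSetoid_out_iso D j))
    refine ⟨⟦j⟧, hjq, ?_⟩
    intro q' hq'
    exact patSetoid_eq_of_iso (ballRep_iso_of_rep hq' hjq)
  have hlim : ∀ q : I₀, ∃ L, Filter.Tendsto (fun n => patternFreq (G n) s (Pq q) (yq q))
      Filter.atTop (nhds L) := by
    intro q
    rcases Nat.eq_zero_or_pos s with hs | hs
    · subst hs
      have hD1 : D = 1 := by simpa using hD
      refine ⟨1, ?_⟩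
      have hone : ∀ n, patternFreq (G n) 0 (Pq q) (yq q) = 1 := by
        intro n
        have hall : ∀ x : V n, ballRep (G n) x 0 (Pq q) (yq q) := by
          intro x
          haveI hsub : Subsingleton (Wq q) := by
            constructor
            intro a b
            have hlt := q.out.1.isLt
            have ha := Fin.isLt a
            have hb2 := Fin.isLt b
            apply Fin.ext
            omega
          have hb : ∀ a : ballSet (G n) x 0, (a : V n) = x := by
            intro a
            have h2 : (a : V n) ∈ ({x} : Set (V n)) := by
              rw [← ballSet_zero (G n) x]
              exact a.2
            exact h2
          refine ⟨⟨fun _ => yq q, fun _ => ⟨x, root_mem _ _ _⟩, ?_, ?_⟩, rfl, ?_⟩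
          · intro a
            apply Subtype.ext
            exact (hb a).symm
          · intro b
            exact Subsingleton.elim _ _
          · intro a b
            exact iff_of_false (fun h => (G n).irrefl (by rwa [hb a, hb b] at h))
              ((Pq q).irrefl)
        unfold patternFreq
        have hset : {x : V n | ballRep (G n) x 0 (Pq q) (yq q)} = Set.univ :=
          Set.eq_univ_of_forall hall
        rw [hset, Nat.card_coe_set_eq, Set.ncard_univ, Nat.card_eq_fintype_card]
        exact div_self (by exact_mod_cast Fintype.card_ne_zero)
      simp only [hone]
      exact tendsto_const_nhds
    · exact hweak s hs (Wq q) (Pq q) (yq q)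
  choose p hp using hlim
  have hcex : ∀ q : I₀, ∃ cq : ℝ, p q ≠ 0 →
      ∀ n (x : V n), ballRep (G n) x s (Pq q) (yq q) → A n x x = cq := by
    intro q
    by_cases hpq : p q = 0
    · exact ⟨0, fun h => absurd hpq h⟩
    · have hev : ∀ᶠ n in Filter.atTop, patternFreq (G n) s (Pq q) (yq q) ≠ 0 :=
        (hp q).eventually_ne hpq
      obtain ⟨n₀, hn₀⟩ := hev.exists
      have hne : {x : V n₀ | ballRep (G n₀) x s (Pq q) (yq q)}.Nonempty := by
        rw [Set.nonempty_iff_ne_empty]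
        intro hemp
        apply hn₀
        unfold patternFreq
        rw [hemp]
        simp
      obtain ⟨x₀, hx₀⟩ := hne
      have hx₀' : ballRep (G n₀) x₀ s (Pq q) (yq q) := hx₀
      refine ⟨A n₀ x₀ x₀, fun _ n x hx => ?_⟩
      have hiso : rootedIso (SimpleGraph.induce (ballSet (G n₀) x₀ s) (G n₀))
          ⟨x₀, root_mem (G n₀) x₀ s⟩ (Pq q) (yq q) :=
        ballRep_iso_of_rep (ballRep_self (G n₀) x₀ s) hx₀'
      have hnt : ¬ Filter.Tendsto (fun n => patternFreq (G n) s
          (SimpleGraph.induce (ballSet (G n₀) x₀ s) (G n₀)) ⟨x₀, root_mem (G n₀) x₀ s⟩)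
          Filter.atTop (nhds 0) := by
        have hsets : ∀ n, {x' : V n | ballRep (G n) x' s
            (SimpleGraph.induce (ballSet (G n₀) x₀ s) (G n₀)) ⟨x₀, root_mem (G n₀) x₀ s⟩}
            = {x' : V n | ballRep (G n) x' s (Pq q) (yq q)} := by
          intro n
          ext x'
          exact ⟨fun h => ballRep_congr h hiso, fun h => ballRep_congr h (rootedIso_symm hiso)⟩
        have heq : (fun n => patternFreq (G n) s
            (SimpleGraph.induce (ballSet (G n₀) x₀ s) (G n₀)) ⟨x₀, root_mem (G n₀) x₀ s⟩)
            = fun n => patternFreq (G n) s (Pq q) (yq q) := by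
          funext n
          unfold patternFreq
          rw [hsets n]
        rw [heq]
        intro hcon
        exact hpq (tendsto_nhds_unique (hp q) hcon)
      have key := hpat n₀ x₀ hnt
      obtain ⟨fx, hfx, hax⟩ := hx
      obtain ⟨f₀, hf₀, ha₀⟩ := hx₀'
      have hroot : (fx.trans f₀.symm) ⟨x, root_mem (G n) x s⟩ = ⟨x₀, root_mem (G n₀) x₀ s⟩ := by
        rw [Equiv.trans_apply, hfx, ← hf₀]
        simp
      have hadj : ∀ a b : ballSet (G n) x s, (G n).Adj ↑a ↑b ↔
          (G n₀).Adj ↑((fx.trans f₀.symm) a) ↑((fx.trans f₀.symm) b) := by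
        intro a b
        rw [hax a b]
        have h2 := ha₀ ((fx.trans f₀.symm) a) ((fx.trans f₀.symm) b)
        simp only [Equiv.trans_apply, Equiv.apply_symm_apply] at h2
        exact h2.symm
      have hfin := key n x (fx.trans f₀.symm) hroot hadj ⟨x, root_mem (G n) x s⟩
      rw [hroot] at hfin
      exact hfin
  choose c hc using hcex
  refine ⟨∑ q : I₀, p q * c q, ?_, ?_⟩
  · exact main_tendsto G s m A (fun n x => hbd n x x) Pq yq p c hcomp hp hc
  · intro I' _ W' _ P' y' p' c' hcomp' hfreq' hc'
    exact tendsto_nhds_unique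
      (main_tendsto G s m A (fun n x => hbd n x x) Pq yq p c hcomp hp hc)
      (main_tendsto G s m A (fun n x => hbd n x x) P' y' p' c' hcomp' hfreq' hc')

end GraphPaper
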